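/- Let z_1, …, z_k be blocks of t_1, …, t_k real variables respectively, and for each block let P_{j,i}(z_i) = z_{1,i}^j + ⋯ + z_{t_i,i}^j. Then for any positive integers m_1, …, m_k and any rational coefficients λ_{j,i}, the polynomial function ℝ^{t_1+⋯+t_k} → ℝ given by Σ_{i=1}^k P_{2m_i,i} + Σ_{i=1}^k Σ_{j=0}^{2m_i−1} λ_{j,i} P_{j,i} is proper, i.e. the preimage of every compact subset of ℝ is compact. -/

import Mathlib

open Filter Polynomial

/-- One-variable key lemma: a monic polynomial map `x ↦ x^M + Σ_{j<M} c j * x^j`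
with `M` positive and even tends to `atTop` along `cocompact ℝ`. -/
lemma one_var_key (M : ℕ) (hM : 0 < M) (heven : Even M) (c : ℕ → ℝ) :
    Tendsto (fun x : ℝ => x ^ M + ∑ jj ∈ Finset.range M, c jj * x ^ jj)
      (cocompact ℝ) atTop := by
  set r : ℝ[X] := ∑ jj ∈ Finset.range M, C (c jj) * X ^ jj with hr_def
  set p : ℝ[X] := X ^ M + r with hp_def
  have hrdeg : r.degree < (M : WithBot ℕ) := by
    refine lt_of_le_of_lt (Polynomial.degree_sum_le _ _) ?_
    rw [Finset.sup_lt_iff (by exact_mod_cast WithBot.bot_lt_coe M)]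
    intro jj hjj
    refine lt_of_le_of_lt (degree_C_mul_X_pow_le _ _) ?_
    exact_mod_cast Finset.mem_range.mp hjj
  have hmonic : p.Monic := monic_X_pow_add hrdeg
  have hpdeg : p.degree = M := by
    rw [hp_def, degree_add_eq_left_of_degree_lt (by rwa [degree_X_pow])]
    exact degree_X_pow M
  have heval : ∀ x : ℝ, eval x p =
      x ^ M + ∑ jj ∈ Finset.range M, c jj * x ^ jj := by
    intro x
    simp [hp_def, hr_def, eval_finset_sum]
  have hdegpos : 0 < p.degree := by rw [hpdeg]; exact_mod_cast hM
  have htop : Tendsto (fun x : ℝ => eval x p) atTop atTop :=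
    p.tendsto_atTop_of_leadingCoeff_nonneg hdegpos (by rw [hmonic.leadingCoeff]; norm_num)
  have hbot : Tendsto (fun x : ℝ => eval x p) atBot atTop := by
    set q : ℝ[X] := p.comp (-X) with hq_def
    have hXdeg : (-X : ℝ[X]).natDegree = 1 := by
      simp [natDegree_neg]
    have hqnat : q.natDegree = p.natDegree := by
      rw [hq_def, natDegree_comp, hXdeg, mul_one]
    have hpnat : p.natDegree = M := natDegree_eq_of_degree_eq_some hpdeg
    have hqlead : q.leadingCoeff = 1 := by
      rw [hq_def, leadingCoeff_comp (by rw [hXdeg]; norm_num), hmonic.leadingCoeff]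
      have : (-X : ℝ[X]).leadingCoeff = -1 := by
        simp [leadingCoeff_neg]
      rw [this, hpnat, heven.neg_one_pow, one_mul]
    have hqdegpos : 0 < q.degree := by
      rw [degree_eq_natDegree (fun h => by simp [h] at hqlead), hqnat, hpnat]
      exact_mod_cast hM
    have hq : Tendsto (fun x : ℝ => eval x q) atTop atTop :=
      q.tendsto_atTop_of_leadingCoeff_nonneg hqdegpos (by rw [hqlead]; norm_num)
    have := hq.comp tendsto_neg_atBot_atTop
    refine this.congr fun x => ?_
    simp [hq_def, eval_comp]
  have : Tendsto (fun x : ℝ => eval x p) (cocompact ℝ) atTop := by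
    rw [cocompact_eq_atBot_atTop, tendsto_sup]
    exact ⟨hbot, htop⟩
  exact this.congr fun x => heval x

/-- for blocks `z_1,…,z_k` of `t_1,…,t_k` real variables, the map
`Σ_i P_{2m_i,i} + Σ_i Σ_{j=0}^{2m_i−1} λ_{j,i} P_{j,i}` is proper, where
`P_{j,i}(w) = Σ_m w_{m,i}^j` is the `j`-th Newton power sum of block `i`. -/
theorem blockwise_newton_sum_map_is_proper
    (k : ℕ) (t : Fin k → ℕ) (m : Fin k → ℕ) (hm : ∀ i, 0 < m i)
    (lam : Fin k → ℕ → ℚ) :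
    ∀ K : Set ℝ, IsCompact K →
      IsCompact ((fun w : ((i : Fin k) × Fin (t i)) → ℝ =>
        (∑ i : Fin k, ∑ j : Fin (t i), w ⟨i, j⟩ ^ (2 * m i)) +
          ∑ i : Fin k, ∑ jj ∈ Finset.range (2 * m i),
            (lam i jj : ℝ) * ∑ j : Fin (t i), w ⟨i, j⟩ ^ jj) ⁻¹' K) := by
  intro K hK
  set ι := (i : Fin k) × Fin (t i)
  set g : Fin k → ℝ → ℝ := fun i x =>
    x ^ (2 * m i) + ∑ jj ∈ Finset.range (2 * m i), (lam i jj : ℝ) * x ^ jj with hg_def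
  set f : (ι → ℝ) → ℝ := fun w => ∑ σ : ι, g σ.1 (w σ) with hf_def
  -- the given map equals f
  have hfeq : (fun w : ι → ℝ =>
      (∑ i : Fin k, ∑ j : Fin (t i), w ⟨i, j⟩ ^ (2 * m i)) +
        ∑ i : Fin k, ∑ jj ∈ Finset.range (2 * m i),
          (lam i jj : ℝ) * ∑ j : Fin (t i), w ⟨i, j⟩ ^ jj) = f := by
    funext w
    rw [hf_def]
    show _ = ∑ σ ∈ (Finset.univ : Finset (Fin k)).sigma (fun i => (Finset.univ : Finset (Fin (t i)))), g σ.1 (w σ)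
    rw [Finset.sum_sigma]
    simp only [hg_def, Finset.sum_add_distrib, Finset.mul_sum]
    congr 1
    refine Finset.sum_congr rfl fun i _ => ?_
    rw [Finset.sum_comm]
  rw [hfeq]
  -- each g i is continuous
  have hgcont : ∀ i, Continuous (g i) := by
    intro i
    apply Continuous.add (continuous_pow _)
    exact continuous_finset_sum _ fun jj _ =>
      continuous_const.mul (continuous_pow jj)
  -- each g i tends to atTop along cocompact
  have hgtop : ∀ i, Tendsto (g i) (cocompact ℝ) atTop := by
    intro i
    exact one_var_key (2 * m i) (Nat.mul_pos two_pos (hm i)) (even_two_mul _) _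
  -- lower bounds for each g i
  have hlb : ∀ i : Fin k, ∃ L : ℝ, ∀ x, L ≤ g i x := by
    intro i
    obtain ⟨x₀, hx₀⟩ := (hgcont i).exists_forall_le (hgtop i)
    exact ⟨g i x₀, hx₀⟩
  choose L hL using hlb
  -- f is continuous
  have hfcont : Continuous f :=
    continuous_finset_sum _ fun σ _ => (hgcont σ.1).comp (continuous_apply σ)
  -- f tends to atTop along cocompact
  have hftop : Tendsto f (cocompact (ι → ℝ)) atTop := by
    rw [← coprodᵢ_cocompact]
    rw [Filter.coprodᵢ]
    rw [tendsto_iSup]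
    intro σ
    have h1 : Tendsto (fun w : ι → ℝ => w σ)
        (comap (Function.eval σ) (cocompact ℝ)) (cocompact ℝ) := tendsto_comap
    have h2 : Tendsto (fun w : ι → ℝ => g σ.1 (w σ) + ∑ τ ∈ Finset.univ.erase σ, L τ.1)
        (comap (Function.eval σ) (cocompact ℝ)) atTop :=
      tendsto_atTop_add_const_right _ _ ((hgtop σ.1).comp h1)
    refine tendsto_atTop_mono (fun w => ?_) h2
    have : f w = g σ.1 (w σ) + ∑ τ ∈ Finset.univ.erase σ, g τ.1 (w τ) := by
      simp only [hf_def]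
      exact (Finset.add_sum_erase _ _ (Finset.mem_univ σ)).symm
    rw [this]
    gcongr with τ hτ
    exact hL τ.1 (w τ)
  -- conclude
  obtain ⟨M, hM⟩ := hK.bddAbove
  have hmem : {w : ι → ℝ | M + 1 ≤ f w} ∈ cocompact (ι → ℝ) :=
    hftop (Filter.mem_atTop (M + 1))
  rw [Filter.mem_cocompact] at hmem
  obtain ⟨C, hC, hCsub⟩ := hmem
  refine hC.of_isClosed_subset (hK.isClosed.preimage hfcont) ?_
  intro w hw
  by_contra hwC
  have := hCsub hwC
  simp only [Set.mem_setOf_eq] at this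
  have hle : f w ≤ M := hM hw
  linarith
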